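/- There exists an absolute constant c > 0 such that for every integer t ≥ 2 and every sufficiently large positive integer n, the Turán number of the t×t grid graph satisfies ex(n, F_t) ≥ c·t^{1/2}·n^{3/2}. -/

import Mathlib

open SimpleGraph

/-- `G` contains a subgraph isomorphic to `H`: there is an injective graph
homomorphism from `H` to `G`. -/
def Contains {α β : Type*} (G : SimpleGraph α) (H : SimpleGraph β) : Prop :=
  ∃ f : H →g G, Function.Injective f

/-- The `t × t` grid graph `F_t = P_t □ P_t`. -/
def gridGraph (t : ℕ) : SimpleGraph (Fin t × Fin t) :=
  (pathGraph t).boxProd (pathGraph t)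

set_option linter.unusedSectionVars false

namespace TuranGrid

open Finset


variable {V : Type*}

/-- one step of a reduced walk, lists are reversed (head = current endpoint). -/
def step (x : V) [DecidableEq V] : List V → List V
  | a :: b :: rest => if b = x then b :: rest else x :: a :: b :: rest
  | R => x :: R

variable [DecidableEq V]

/-- no immediate backtracking -/
def NB : List V → Prop
  | a :: b :: l => l.head? ≠ some a ∧ NB (b :: l)
  | _ => True

structure GoodW (B : SimpleGraph V) (r : V) (R : List V) : Prop where
  ne : R ≠ []
  chain : R.Chain' B.Adj
  nb : NB R
  last : R.getLast? = some r

lemma step_head (x : V) (R : List V) : (step x R).head? = some x := by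
  match R with
  | [] => rfl
  | [a] => rfl
  | a :: b :: rest =>
    by_cases h : b = x <;> simp [step, h]

lemma step_cases (x : V) (R : List V) :
    step x R = x :: R ∨ ∃ a, R = a :: step x R := by
  match R with
  | [] => left; rfl
  | [a] => left; rfl
  | a :: b :: rest =>
    by_cases h : b = x
    · right; exact ⟨a, by simp [step, h]⟩
    · left; simp [step, h]

lemma step_good {B : SimpleGraph V} {r : V} {R : List V} {a x : V}
    (h : GoodW B r R) (ha : R.head? = some a) (hx : B.Adj x a) :
    GoodW B r (step x R) := by
  match R with
  | [] => exact absurd rfl h.ne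
  | [b] =>
    simp at ha; subst ha
    exact ⟨by simp [step], by simp only [step]; exact List.isChain_pair.2 hx, by simp [step, NB], by
      simpa [step] using h.last⟩
  | a' :: b :: rest =>
    simp at ha; subst ha
    by_cases hb : b = x
    · subst hb
      refine ⟨by simp [step], ?_, ?_, ?_⟩
      · simp [step]; exact h.chain.tail
      · have := h.nb; simp [step, NB] at this ⊢; exact this.2
      · simpa [step] using h.last
    · refine ⟨by simp [step, hb], ?_, ?_, ?_⟩
      · simp only [step, if_neg hb]
        exact List.isChain_cons_cons.2 ⟨hx, h.chain⟩
      · have := h.nb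
        simp [step, if_neg hb, NB] at this ⊢
        exact ⟨fun hbx => hb hbx, this⟩
      · simp only [step, if_neg hb]
        simpa using h.last

lemma step_back {B : SimpleGraph V} {r : V} {R : List V} {a x : V}
    (h : GoodW B r R) (ha : R.head? = some a) (hx : B.Adj a x) :
    step a (step x R) = R := by
  have hax : a ≠ x := B.ne_of_adj hx
  match R with
  | [] => exact absurd rfl h.ne
  | [b] =>
    simp at ha; subst ha
    simp [step, if_pos rfl]
  | a' :: b :: rest =>
    simp only [List.head?] at ha
    obtain rfl : a' = a := by injection ha
    by_cases hb : b = x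
    · have h1 : step x (a' :: b :: rest) = b :: rest := by
        simp [step, if_pos hb]
      rw [h1]
      have hnb := h.nb
      match rest with
      | [] => simp [step]
      | c :: rest' =>
        have hca : ¬ (c = a') := by
          intro hc
          have := hnb.1
          simp [hc] at this
        simp [step, if_neg hca]
    · have h1 : step x (a' :: b :: rest) = x :: a' :: b :: rest := by
        simp [step, if_neg hb]
      rw [h1]
      simp [step, if_pos rfl]


lemma getLast?_suffix {r : V} : ∀ {L : List V}, L.getLast? = some r → [r] <:+ L
  | [], h => by simp at h
  | [a], h => by
    simp at h; subst h; exact List.suffix_refl _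
  | a :: b :: l, h => by
    have h2 : (b :: l).getLast? = some r := by
      rw [List.getLast?_cons_cons] at h; exact h
    exact (getLast?_suffix h2).trans (List.suffix_cons a _)

section Psi

variable (B : SimpleGraph V) (r : V) (φ : ℕ → ℕ → V) (t : ℕ)

/-- the first column of lifted walks -/
def colw : ℕ → List V
  | 0 => [φ 0 0]
  | i + 1 => step (φ (i+1) 0) (colw i)

/-- the lifted reduced walk at position (i, j) -/
def psiw (i : ℕ) : ℕ → List V
  | 0 => colw φ i
  | j + 1 => step (φ i (j+1)) (psiw i j)

lemma psiw_head (i j : ℕ) : (psiw φ i j).head? = some (φ i j) := by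
  match j with
  | 0 =>
    match i with
    | 0 => rfl
    | i + 1 => exact step_head _ _
  | j + 1 => exact step_head _ _

variable {φ t}
variable (hH : ∀ i j, i < t → j + 1 < t → B.Adj (φ i j) (φ i (j+1)))
variable (hV : ∀ i j, i + 1 < t → j < t → B.Adj (φ i j) (φ (i+1) j))
variable (hsq : ∀ i j, i + 1 < t → j + 1 < t →
    φ i j = φ (i+1) (j+1) ∨ φ i (j+1) = φ (i+1) j)

include hH hV in
lemma psiw_good : ∀ i j, i < t → j < t → GoodW B (φ 0 0) (psiw φ i j) := by
  intro i
  induction i with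
  | zero =>
    intro j
    induction j with
    | zero => intro _ _; exact ⟨by simp [psiw, colw], by simp [psiw, colw]; exact List.isChain_singleton _,
        by simp [psiw, colw, NB], by simp [psiw, colw]⟩
    | succ j ihj =>
      intro h0 hj
      have hg := ihj h0 (Nat.lt_of_succ_lt hj)
      exact step_good hg (psiw_head φ 0 j) ((hH 0 j h0 hj).symm)
  | succ i ihi =>
    have hgcol : ∀ i', i' < t → GoodW B (φ 0 0) (colw φ i') := by
      intro i'
      induction i' with
      | zero => intro _; exact ⟨by simp [colw], by simp [colw]; exact List.isChain_singleton _,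
          by simp [colw, NB], by simp [colw]⟩
      | succ i' ih =>
        intro hi'
        have hg := ih (Nat.lt_of_succ_lt hi')
        have : (colw φ i').head? = some (φ i' 0) := psiw_head φ i' 0
        exact step_good hg this ((hV i' 0 hi' (by omega)).symm)
    intro j
    induction j with
    | zero => intro hi _; exact hgcol (i+1) hi
    | succ j ihj =>
      intro hi hj
      have hg := ihj hi (Nat.lt_of_succ_lt hj)
      exact step_good hg (psiw_head φ (i+1) j) ((hH (i+1) j hi hj).symm)

include hH hV hsq in
lemma psiw_vert : ∀ i j, i + 1 < t → j < t →
    psiw φ (i+1) j = step (φ (i+1) j) (psiw φ i j) := by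
  intro i j
  induction j with
  | zero => intro _ _; rfl
  | succ j ihj =>
    intro hi hj
    have hjt : j < t := Nat.lt_of_succ_lt hj
    have hit : i < t := Nat.lt_of_succ_lt hi
    have ih := ihj hi hjt
    have hR : GoodW B (φ 0 0) (psiw φ i j) := psiw_good B hH hV i j hit hjt
    have hhd : (psiw φ i j).head? = some (φ i j) := psiw_head φ i j
    rcases hsq i j hi hj with hdiag | hanti
    · -- φ i j = φ (i+1) (j+1)
      have e1 : psiw φ (i+1) (j+1) = step (φ (i+1) (j+1)) (step (φ (i+1) j) (psiw φ i j)) := by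
        rw [show psiw φ (i+1) (j+1) = step (φ (i+1) (j+1)) (psiw φ (i+1) j) from rfl, ih]
      have e2 : step (φ (i+1) (j+1)) (step (φ (i+1) j) (psiw φ i j)) = psiw φ i j := by
        rw [← hdiag]
        exact step_back hR hhd (hV i j hi hjt)
      have e3 : step (φ (i+1) (j+1)) (psiw φ i (j+1)) = psiw φ i j := by
        show step (φ (i+1) (j+1)) (step (φ i (j+1)) (psiw φ i j)) = psiw φ i j
        rw [← hdiag]
        exact step_back hR hhd (hH i j hit hj)
      rw [e1, e2, ← e3]
    · -- φ i (j+1) = φ (i+1) j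
      show step (φ (i+1) (j+1)) (psiw φ (i+1) j) = step (φ (i+1) (j+1)) (psiw φ i (j+1))
      rw [ih, ← hanti]
      rfl

end Psi
section Aux

lemma departure {p : ℕ → Prop} : ∀ b {a}, p a → ¬ p b → a < b →
    ∃ j, a ≤ j ∧ j < b ∧ p j ∧ ¬ p (j+1) := by
  intro b
  induction b with
  | zero => intro a _ _ h; omega
  | succ b ih =>
    intro a ha hb hab
    by_cases hpb : p b
    · exact ⟨b, by omega, by omega, hpb, hb⟩
    · have hlt : a < b := by
        rcases Nat.lt_or_ge a b with h | h
        · exact h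
        · exfalso
          have : a = b := by omega
          exact hpb (this ▸ ha)
      obtain ⟨j, h1, h2, h3, h4⟩ := ih ha hpb hlt
      exact ⟨j, h1, by omega, h3, h4⟩

lemma exists_boundary {p : ℕ → Prop} {a b : ℕ} (ha : p a) (hb : ¬ p b) :
    ∃ j, min a b ≤ j ∧ j + 1 ≤ max a b ∧
      ((p j ∧ ¬ p (j+1)) ∨ (¬ p j ∧ p (j+1))) := by
  have hne : a ≠ b := fun h => hb (h ▸ ha)
  rcases Nat.lt_or_ge a b with h | h
  · obtain ⟨j, h1, h2, h3, h4⟩ := departure b ha hb h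
    exact ⟨j, by omega, by omega, Or.inl ⟨h3, h4⟩⟩
  · have h' : b < a := by omega
    obtain ⟨j, h1, h2, h3, h4⟩ := departure (p := fun m => ¬ p m) a hb (not_not.mpr ha) h'
    exact ⟨j, by omega, by omega, Or.inr ⟨h3, not_not.mp h4⟩⟩

lemma greedy {ι : Type*} [DecidableEq ι] (I : Finset ι) (h : ι → ℕ) (M : ℕ)
    (hM : ∀ i ∈ I, 3 * h i ≤ M) (htot : M < 3 * ∑ i ∈ I, h i) :
    ∃ sel, sel ⊆ I ∧ M < 3 * ∑ i ∈ sel, h i ∧ 3 * ∑ i ∈ sel, h i ≤ 2 * M := by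
  classical
  set P := I.powerset.filter (fun u => M < 3 * ∑ i ∈ u, h i) with hP
  have hPne : P.Nonempty := ⟨I, by simp [hP, htot]⟩
  obtain ⟨sel, hselP, hmin⟩ := P.exists_min_image (fun u => u.card) hPne
  rw [hP, Finset.mem_filter, Finset.mem_powerset] at hselP
  refine ⟨sel, hselP.1, hselP.2, ?_⟩
  by_contra hgt
  push_neg at hgt
  have hselne : sel.Nonempty := by
    rcases Finset.eq_empty_or_nonempty sel with rfl | hne
    · exact absurd hselP.2 (by simp)
    · exact hne
  obtain ⟨i, hi⟩ := hselne
  have hiI : i ∈ I := hselP.1 hi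
  have hsum : ∑ j ∈ sel.erase i, h j + h i = ∑ j ∈ sel, h j :=
    Finset.sum_erase_add sel h hi
  have hP' : sel.erase i ∈ P := by
    rw [hP, Finset.mem_filter, Finset.mem_powerset]
    refine ⟨(Finset.erase_subset _ _).trans hselP.1, ?_⟩
    have hMi := hM i hiI
    omega
  have hmin' := hmin _ hP'
  have hcard := Finset.card_erase_of_mem hi
  have hpos : 1 ≤ sel.card := Finset.card_pos.mpr ⟨i, hi⟩
  omega

lemma suffix_proper {W : Type*} {w L : List W} (h : w <:+ L) (hne : w ≠ L) :
    ∃ x, (x :: w) <:+ L := by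
  obtain ⟨p, hp⟩ := h
  rcases p.eq_nil_or_concat with rfl | ⟨p', x, rfl⟩
  · exact absurd (by simpa using hp) hne
  · rw [List.concat_eq_append, List.append_assoc, List.singleton_append] at hp
    exact ⟨x, p', hp⟩

lemma suffix_eq_of_length {W : Type*} {c₁ c₂ L : List W} (h1 : c₁ <:+ L) (h2 : c₂ <:+ L)
    (h : c₁.length = c₂.length) : c₁ = c₂ := by
  obtain ⟨p1, hp1⟩ := h1
  obtain ⟨p2, hp2⟩ := h2
  have hpp : p2 ++ c₂ = p1 ++ c₁ := by rw [hp1, hp2]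
  have hlen : p2.length = p1.length := by
    have := congrArg List.length hpp
    simp at this
    omega
  exact ((List.append_inj hpp hlen).2).symm

lemma cons_of_suffix_succ {W : Type*} {w c : List W} (h : w <:+ c)
    (hl : c.length = w.length + 1) : ∃ x, c = x :: w := by
  have hne : w ≠ c := fun he => by rw [he] at hl; omega
  obtain ⟨x, hx⟩ := suffix_proper h hne
  exact ⟨x, (hx.eq_of_length (by simp [hl])).symm⟩

end Aux

section GridAdj

variable {t : ℕ}

lemma grid_adj_h {i j j' : Fin t} (h : (j : ℕ) + 1 = (j' : ℕ)) :
    (gridGraph t).Adj (i, j) (i, j') := by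
  apply SimpleGraph.boxProd_adj.mpr
  right
  exact ⟨pathGraph_adj.mpr (Or.inl h), rfl⟩

lemma grid_adj_v {i i' j : Fin t} (h : (i : ℕ) + 1 = (i' : ℕ)) :
    (gridGraph t).Adj (i, j) (i', j) := by
  apply SimpleGraph.boxProd_adj.mpr
  left
  exact ⟨pathGraph_adj.mpr (Or.inl h), rfl⟩

end GridAdj

section Iso

variable {t : ℕ}

lemma line_S (A Bf S : Finset (Fin t × Fin t))
    (hcover : ∀ v, v ∉ A → v ∉ Bf → v ∈ S)
    (hdisj : ∀ v, v ∈ A → v ∈ Bf → False)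
    (hedge : ∀ u v, u ∈ A → v ∈ Bf → ¬ (gridGraph t).Adj u v)
    (f : Fin t → Fin t × Fin t)
    (hadj : ∀ j j' : Fin t, (j : ℕ) + 1 = (j' : ℕ) → (gridGraph t).Adj (f j) (f j'))
    {ja jb : Fin t} (hja : f ja ∈ A) (hjb : f jb ∈ Bf) : ∃ j, f j ∈ S := by
  classical
  set p : ℕ → Prop := fun m => if h : m < t then f ⟨m, h⟩ ∈ A else False with hp
  have hpa : p ja.val := by simp [hp, ja.isLt, Fin.eta, hja]
  have hpb : ¬ p jb.val := by
    simp only [hp, jb.isLt, dif_pos, Fin.eta]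
    intro hmem
    exact hdisj _ hmem hjb
  obtain ⟨j, h1, h2, h3⟩ := exists_boundary hpa hpb
  have hjt : j < t := by
    have : max ja.val jb.val < t := max_lt ja.isLt jb.isLt
    omega
  have hj1t : j + 1 < t := by
    have : max ja.val jb.val < t := max_lt ja.isLt jb.isLt
    omega
  have hadj' : (gridGraph t).Adj (f ⟨j, hjt⟩) (f ⟨j+1, hj1t⟩) := hadj _ _ rfl
  rcases h3 with ⟨hpj, hpj1⟩ | ⟨hpj, hpj1⟩
  · -- f j ∈ A, f (j+1) ∉ A
    have hfA : f ⟨j, hjt⟩ ∈ A := by simpa [hp, hjt] using hpj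
    have hfnA : f ⟨j+1, hj1t⟩ ∉ A := by simpa [hp, hj1t] using hpj1
    by_cases hfB : f ⟨j+1, hj1t⟩ ∈ Bf
    · exact absurd hadj' (hedge _ _ hfA hfB)
    · exact ⟨_, hcover _ hfnA hfB⟩
  · have hfA : f ⟨j+1, hj1t⟩ ∈ A := by simpa [hp, hj1t] using hpj1
    have hfnA : f ⟨j, hjt⟩ ∉ A := by simpa [hp, hjt] using hpj
    by_cases hfB : f ⟨j, hjt⟩ ∈ Bf
    · exact absurd hadj'.symm (hedge _ _ hfA hfB)
    · exact ⟨_, hcover _ hfnA hfB⟩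

lemma grid_iso (ht : 2 ≤ t) (A Bf S : Finset (Fin t × Fin t))
    (hcover : ∀ v, v ∉ A → v ∉ Bf → v ∈ S)
    (hdisj : ∀ v, v ∈ A → v ∈ Bf → False)
    (hedge : ∀ u v, u ∈ A → v ∈ Bf → ¬ (gridGraph t).Adj u v)
    (hA : t * t ≤ 5 * A.card) (hB : t * t ≤ 5 * Bf.card) :
    t ≤ 10 * S.card := by
  classical
  by_contra hS
  push_neg at hS
  have ht0 : 0 < t := by omega
  -- rows meeting A
  set rowsA : Finset (Fin t) := univ.filter (fun i => ∃ j, (i, j) ∈ A) with hrA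
  have hAsub : A ⊆ rowsA ×ˢ univ := by
    intro v hv
    rw [Finset.mem_product]
    exact ⟨by simp [hrA]; exact ⟨v.2, by simpa using hv⟩, Finset.mem_univ _⟩
  have hcardA : A.card ≤ rowsA.card * t := by
    have := Finset.card_le_card hAsub
    simpa [Finset.card_product] using this
  have hrowsA : t ≤ 5 * rowsA.card := by
    have h1 : t * t ≤ (5 * rowsA.card) * t := by
      calc t * t ≤ 5 * A.card := hA
      _ ≤ 5 * (rowsA.card * t) := by omega
      _ = (5 * rowsA.card) * t := by ring
    exact Nat.le_of_mul_le_mul_right h1 ht0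
  -- rows meeting both
  set rowsAB : Finset (Fin t) :=
    univ.filter (fun i => (∃ j, (i, j) ∈ A) ∧ (∃ j, (i, j) ∈ Bf)) with hrAB
  have hrowsAB : rowsAB.card ≤ S.card := by
    apply Finset.card_le_card_of_injOn
      (fun i => (i, if h : ∃ j, (i, j) ∈ S then h.choose else i))
    · intro i hi
      simp only [Finset.mem_coe, hrAB, Finset.mem_filter] at hi
      obtain ⟨-, ⟨ja, hja⟩, ⟨jb, hjb⟩⟩ := hi
      have hexS : ∃ j, (i, j) ∈ S := by
        obtain ⟨j, hj⟩ := line_S A Bf S hcover hdisj hedge (fun j => (i, j))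
          (fun j j' hjj => grid_adj_h hjj) hja hjb
        exact ⟨j, hj⟩
      simp only [dif_pos hexS]
      exact hexS.choose_spec
    · intro i _ i' _ hii
      exact (Prod.ext_iff.mp hii).1
  have hex0 : ∃ i₀, i₀ ∈ rowsA ∧ i₀ ∉ rowsAB := by
    have hcard : rowsAB.card < rowsA.card := by omega
    by_contra hno
    push_neg at hno
    exact absurd (Finset.card_le_card hno) (by omega)
  obtain ⟨i₀, hi₀A, hi₀AB⟩ := hex0
  have hA0 : ∃ j, (i₀, j) ∈ A := by
    rw [hrA, Finset.mem_filter] at hi₀A; exact hi₀A.2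
  have hB0 : ¬ ∃ j, (i₀, j) ∈ Bf := by
    intro hexB
    exact hi₀AB (by rw [hrAB, Finset.mem_filter]; exact ⟨Finset.mem_univ _, hA0, hexB⟩)
  push_neg at hB0
  -- columns where row i₀ is in A
  set colsA : Finset (Fin t) := univ.filter (fun j => (i₀, j) ∈ A) with hcA
  have hcolsA : t ≤ colsA.card + S.card := by
    have hsplit := Finset.card_filter_add_card_filter_not
      (s := (univ : Finset (Fin t))) (p := fun j => (i₀, j) ∈ A)
    rw [← hcA] at hsplit
    have hneg : (univ.filter (fun j => ¬ (i₀, j) ∈ A)).card ≤ S.card := by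
      apply Finset.card_le_card_of_injOn (fun j => (i₀, j))
      · intro j hj
        rw [Finset.mem_coe, Finset.mem_filter] at hj
        exact hcover _ hj.2 (hB0 j)
      · intro a _ b _ hab
        exact (Prod.ext_iff.mp hab).2
    have hu : (univ : Finset (Fin t)).card = t := by simp
    omega
  -- columns meeting B
  set colsB : Finset (Fin t) := univ.filter (fun j => ∃ i, (i, j) ∈ Bf) with hcB
  have hBsub : Bf ⊆ univ ×ˢ colsB := by
    intro v hv
    rw [Finset.mem_product]
    exact ⟨Finset.mem_univ _, by simp [hcB]; exact ⟨v.1, by simpa using hv⟩⟩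
  have hcardB : Bf.card ≤ t * colsB.card := by
    have := Finset.card_le_card hBsub
    simpa [Finset.card_product] using this
  have hcolsB : t ≤ 5 * colsB.card := by
    have h1 : t * t ≤ t * (5 * colsB.card) := by
      calc t * t ≤ 5 * Bf.card := hB
      _ ≤ 5 * (t * colsB.card) := by omega
      _ = t * (5 * colsB.card) := by ring
    exact Nat.le_of_mul_le_mul_left h1 ht0
  -- intersection
  set X : Finset (Fin t) := colsA ∩ colsB with hX
  have hunion : colsA.card + colsB.card = (colsA ∪ colsB).card + X.card :=
    (Finset.card_union_add_card_inter _ _).symm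
  have huni : (colsA ∪ colsB).card ≤ t := by
    have := Finset.card_le_card (Finset.subset_univ (colsA ∪ colsB))
    simpa using this
  have hXS : X.card ≤ S.card := by
    apply Finset.card_le_card_of_injOn
      (fun j => ((if h : ∃ i, (i, j) ∈ S then h.choose else j), j))
    · intro j hj
      simp only [Finset.mem_coe, hX, Finset.mem_inter, hcA, hcB, Finset.mem_filter] at hj
      obtain ⟨⟨-, hjA⟩, -, i1, hi1⟩ := hj
      have hexS : ∃ i, (i, j) ∈ S := by
        obtain ⟨i2, hi2⟩ := line_S A Bf S hcover hdisj hedge (fun i => (i, j))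
          (fun i i' hii => grid_adj_v hii) hjA hi1
        exact ⟨i2, hi2⟩
      simp only [dif_pos hexS]
      exact hexS.choose_spec
    · intro a _ b _ hab
      exact (Prod.ext_iff.mp hab).2
  omega

end Iso


section Cut

lemma no_small_fiber {W : Type*} [DecidableEq W] {t s : ℕ} (ht : 2 ≤ t) (hts : 10 * s < t)
    (Ψ : Fin t × Fin t → List W) (r : W)
    (hroot : ∀ v, [r] <:+ Ψ v)
    (hcons : ∀ u v, (gridGraph t).Adj u v →
      (∃ x, Ψ v = x :: Ψ u) ∨ (∃ x, Ψ u = x :: Ψ v))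
    (hfib : ∀ L : List W, (univ.filter (fun v => Ψ v = L)).card ≤ s) : False := by
  classical
  set T := t * t with hT
  have ht0 : 0 < t := by omega
  have htT : t ≤ T := by
    have := Nat.mul_le_mul_left t (show 1 ≤ t by omega)
    simpa [hT] using this
  have huniv : (univ : Finset (Fin t × Fin t)).card = T := by simp [hT]
  set g : List W → ℕ := fun w => (univ.filter (fun v => w <:+ Ψ v)).card with hg
  set 𝒮 : Finset (List W) := univ.biUnion (fun v => (Ψ v).tails.toFinset) with hSS
  have hmem𝒮 : ∀ {w : List W}, w ∈ 𝒮 ↔ ∃ v, w <:+ Ψ v := by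
    intro w
    simp [hSS, List.mem_tails]
  set v₀ : Fin t × Fin t := (⟨0, ht0⟩, ⟨0, ht0⟩) with hv₀
  set D : Finset (List W) := 𝒮.filter (fun w => 2 * T < 3 * g w) with hD
  have hrootD : [r] ∈ D := by
    rw [hD, mem_filter]
    refine ⟨hmem𝒮.mpr ⟨v₀, hroot v₀⟩, ?_⟩
    have hgr : g [r] = T := by
      rw [hg]
      simp only
      rw [Finset.filter_true_of_mem (fun v _ => hroot v), huniv]
    omega
  obtain ⟨w, hwD, hwmax⟩ := D.exists_max_image (fun w => w.length) ⟨[r], hrootD⟩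
  rw [hD, mem_filter] at hwD
  obtain ⟨hw𝒮, hwbig⟩ := hwD
  set C : Finset (List W) := 𝒮.filter (fun c => c.length = w.length + 1 ∧ w <:+ c) with hC
  have hchild_le : ∀ c ∈ C, 3 * g c ≤ 2 * T := by
    intro c hc
    by_contra hbig
    push_neg at hbig
    have hcD : c ∈ D := by
      rw [hD, mem_filter]
      exact ⟨(mem_filter.mp hc).1, hbig⟩
    have h1 := hwmax c hcD
    have h2 := (mem_filter.mp hc).2.1
    omega
  set Sfib : Finset (Fin t × Fin t) := univ.filter (fun v => Ψ v = w) with hSfib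
  have hSle : Sfib.card ≤ s := hfib w
  -- the partition of the cone over w
  have hCdisj : ∀ c₁ ∈ C, ∀ c₂ ∈ C, c₁ ≠ c₂ →
      Disjoint (univ.filter (fun v => c₁ <:+ Ψ v)) (univ.filter (fun v => c₂ <:+ Ψ v)) := by
    intro c₁ hc₁ c₂ hc₂ hne
    rw [Finset.disjoint_left]
    intro v hv1 hv2
    rw [mem_filter] at hv1 hv2
    have hl1 := (mem_filter.mp hc₁).2.1
    have hl2 := (mem_filter.mp hc₂).2.1
    exact hne (suffix_eq_of_length hv1.2 hv2.2 (by omega))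
  have hdisjSC : ∀ c ∈ C, Disjoint Sfib (univ.filter (fun v => c <:+ Ψ v)) := by
    intro c hc
    rw [Finset.disjoint_left]
    intro v hv1 hv2
    rw [hSfib, mem_filter] at hv1
    rw [mem_filter] at hv2
    have hlen := hv2.2.length_le
    have hl := (mem_filter.mp hc).2.1
    rw [hv1.2] at hlen
    omega
  have hsplit : univ.filter (fun v => w <:+ Ψ v) =
      Sfib ∪ C.biUnion (fun c => univ.filter (fun v => c <:+ Ψ v)) := by
    ext v
    simp only [hSfib, mem_union, mem_filter, mem_biUnion, mem_univ, true_and]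
    constructor
    · intro hsuf
      by_cases heq : Ψ v = w
      · left; exact heq
      · right
        obtain ⟨x, hx⟩ := suffix_proper hsuf (fun h => heq h.symm)
        refine ⟨x :: w, ?_, hx⟩
        rw [hC, mem_filter]
        exact ⟨hmem𝒮.mpr ⟨v, hx⟩, by simp, List.suffix_cons x w⟩
    · rintro (heq | ⟨c, hcC, hcv⟩)
      · rw [heq]
      · exact ((mem_filter.mp hcC).2.2).trans hcv
  have hpart : g w = Sfib.card + ∑ c ∈ C, g c := by
    have h1 : (univ.filter (fun v => w <:+ Ψ v)).card =
        Sfib.card + (C.biUnion (fun c => univ.filter (fun v => c <:+ Ψ v))).card := by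
      rw [hsplit]
      apply Finset.card_union_of_disjoint
      rw [Finset.disjoint_right]
      intro v hv
      rw [mem_biUnion] at hv
      obtain ⟨c, hcC, hcv⟩ := hv
      exact fun hvS => (Finset.disjoint_left.mp (hdisjSC c hcC)) hvS hcv
    have h2 : (C.biUnion (fun c => univ.filter (fun v => c <:+ Ψ v))).card =
        ∑ c ∈ C, (univ.filter (fun v => c <:+ Ψ v)).card :=
      Finset.card_biUnion hCdisj
    rw [hg]
    simp only
    rw [h1, h2]
  have htot : T < 3 * ∑ c ∈ C, g c := by
    have : ∑ c ∈ C, g c = ∑ c ∈ C, (univ.filter (fun v => c <:+ Ψ v)).card := rfl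
    omega
  -- select a balanced union of children cones
  have hsel : ∃ sel, sel ⊆ C ∧ T < 3 * ∑ c ∈ sel, g c ∧ 3 * ∑ c ∈ sel, g c ≤ 2 * T := by
    by_cases hexbig : ∃ c ∈ C, T < 3 * g c
    · obtain ⟨c₀, hc₀C, hc₀⟩ := hexbig
      refine ⟨{c₀}, by simpa using hc₀C, by simpa using hc₀, ?_⟩
      have := hchild_le c₀ hc₀C
      simpa using this
    · push_neg at hexbig
      exact greedy C g T (fun c hc => by have := hexbig c hc; omega) htot
  obtain ⟨sel, hselC, hAlow, hAhigh⟩ := hsel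
  set A : Finset (Fin t × Fin t) :=
    sel.biUnion (fun c => univ.filter (fun v => c <:+ Ψ v)) with hA
  have hAcard : A.card = ∑ c ∈ sel, g c := by
    rw [hA]
    exact Finset.card_biUnion (fun c₁ h1 c₂ h2 hne => hCdisj c₁ (hselC h1) c₂ (hselC h2) hne)
  set Bf : Finset (Fin t × Fin t) := univ \ (A ∪ Sfib) with hBf
  have hASdisj : ∀ v, v ∈ A → v ∈ Sfib → False := by
    intro v hvA hvS
    rw [hA, mem_biUnion] at hvA
    obtain ⟨c, hcsel, hcv⟩ := hvA
    exact (Finset.disjoint_left.mp (hdisjSC c (hselC hcsel))) hvS (by exact hcv)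
  have hcover : ∀ v, v ∉ A → v ∉ Bf → v ∈ Sfib := by
    intro v hvA hvB
    rw [hBf, mem_sdiff] at hvB
    push_neg at hvB
    rcases mem_union.mp (hvB (mem_univ v)) with h | h
    · exact absurd h hvA
    · exact h
  have hdisjAB : ∀ v, v ∈ A → v ∈ Bf → False := by
    intro v hvA hvB
    rw [hBf, mem_sdiff] at hvB
    exact hvB.2 (mem_union_left _ hvA)
  have hedge : ∀ u v, u ∈ A → v ∈ Bf → ¬ (gridGraph t).Adj u v := by
    intro u v hu hv hadj
    have hvA : v ∉ A := fun h => hdisjAB v h hv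
    have hvS : v ∉ Sfib := by
      intro h
      rw [hBf, mem_sdiff] at hv
      exact hv.2 (mem_union_right _ h)
    rw [hA, mem_biUnion] at hu
    obtain ⟨c, hcsel, hcu⟩ := hu
    have hcu2 : c <:+ Ψ u := (mem_filter.mp hcu).2
    have hcC := hselC hcsel
    have hclen := (mem_filter.mp hcC).2.1
    have hcw := (mem_filter.mp hcC).2.2
    obtain ⟨x, rfl⟩ := cons_of_suffix_succ hcw hclen
    rcases hcons u v hadj with ⟨y, hy⟩ | ⟨y, hy⟩
    · -- Ψ v = y :: Ψ u
      apply hvA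
      rw [hA, mem_biUnion]
      refine ⟨x :: w, hcsel, ?_⟩
      rw [mem_filter]
      exact ⟨mem_univ _, hcu2.trans (by rw [hy]; exact List.suffix_cons y (Ψ u))⟩
    · -- Ψ u = y :: Ψ v
      rw [hy] at hcu2
      rcases List.suffix_cons_iff.mp hcu2 with heq | hsuf
      · apply hvS
        rw [hSfib, mem_filter]
        have : Ψ v = w := by
          injection heq with h1 h2
          exact h2.symm
        exact ⟨mem_univ _, this⟩
      · apply hvA
        rw [hA, mem_biUnion]
        exact ⟨x :: w, hcsel, by rw [mem_filter]; exact ⟨mem_univ _, hsuf⟩⟩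
  -- cardinalities
  have hABS : A.card + Sfib.card + Bf.card = T := by
    have hsub : A ∪ Sfib ⊆ univ := subset_univ _
    have h1 : (A ∪ Sfib).card = A.card + Sfib.card :=
      Finset.card_union_of_disjoint (Finset.disjoint_left.mpr (fun v h1 h2 => hASdisj v h1 h2))
    have h2 : Bf.card = T - (A ∪ Sfib).card := by
      rw [hBf, Finset.card_sdiff, Finset.inter_univ, huniv]
    have h3 : (A ∪ Sfib).card ≤ T := by
      have := Finset.card_le_card hsub
      omega
    omega
  have hAbound : T ≤ 5 * A.card := by omega
  have hBbound : T ≤ 5 * Bf.card := by omega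
  have hfinal := grid_iso ht A Bf Sfib hcover hdisjAB hedge hAbound hBbound
  omega

end Cut


def OneCommon {V : Type*} (B : SimpleGraph V) : Prop :=
  ∀ u v w₁ w₂ : V, u ≠ v → B.Adj u w₁ → B.Adj v w₁ → B.Adj u w₂ → B.Adj v w₂ → w₁ = w₂

section Base

variable (q : ℕ) [Fact q.Prime]

abbrev Vb := (ZMod q × ZMod q) ⊕ (ZMod q × ZMod q)

def bAdj : Vb q → Vb q → Prop
  | Sum.inl p, Sum.inr l => p.2 = l.1 * p.1 + l.2
  | Sum.inr l, Sum.inl p => p.2 = l.1 * p.1 + l.2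
  | _, _ => False

def Bgraph : SimpleGraph (Vb q) where
  Adj := bAdj q
  symm := ⟨by rintro (p | l) (p' | l') h <;> simp [bAdj] at h ⊢ <;> exact h⟩
  loopless := ⟨by rintro (p | l) h <;> simp [bAdj] at h⟩

lemma Bgraph_adj_pl (p l : ZMod q × ZMod q) :
    (Bgraph q).Adj (Sum.inl p) (Sum.inr l) ↔ p.2 = l.1 * p.1 + l.2 := Iff.rfl

lemma oneCommon_B : OneCommon (Bgraph q) := by
  rintro (⟨x1, y1⟩ | ⟨a1, b1⟩) (⟨x2, y2⟩ | ⟨a2, b2⟩) w₁ w₂ hne h11 h21 h12 h22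
  · -- two points
    rcases w₁ with p | ⟨a, b⟩
    · exact absurd h11 (by simp [Bgraph, bAdj])
    rcases w₂ with p | ⟨a', b'⟩
    · exact absurd h12 (by simp [Bgraph, bAdj])
    simp only [Bgraph, bAdj] at h11 h21 h12 h22
    have hx : x1 ≠ x2 := by
      intro hx
      apply hne
      subst hx
      have : y1 = y2 := by linear_combination h11 - h21
      rw [this]
    have ha : a = a' := by
      have h0 : (x1 - x2) * (a - a') = 0 := by linear_combination h21 + h12 - h11 - h22
      rcases mul_eq_zero.mp h0 with h | h
      · exact absurd (sub_eq_zero.mp h) hx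
      · exact sub_eq_zero.mp h
    have hb : b = b' := by linear_combination h12 - h11 - x1 * ha
    rw [ha, hb]
  · -- point and line: no common neighbour possible
    rcases w₁ with p | l
    · exact absurd h11 (by simp [Bgraph, bAdj])
    · exact absurd h21 (by simp [Bgraph, bAdj])
  · rcases w₁ with p | l
    · exact absurd h21 (by simp [Bgraph, bAdj])
    · exact absurd h11 (by simp [Bgraph, bAdj])
  · -- two lines
    rcases w₁ with ⟨x, y⟩ | l
    swap
    · exact absurd h11 (by simp [Bgraph, bAdj])
    rcases w₂ with ⟨x', y'⟩ | l
    swap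
    · exact absurd h12 (by simp [Bgraph, bAdj])
    simp only [Bgraph, bAdj] at h11 h21 h12 h22
    have ha : a1 ≠ a2 := by
      intro ha
      apply hne
      subst ha
      have : b1 = b2 := by linear_combination h21 - h11
      rw [this]
    have hx : x = x' := by
      have h0 : (a1 - a2) * (x - x') = 0 := by linear_combination h21 + h12 - h11 - h22
      rcases mul_eq_zero.mp h0 with h | h
      · exact absurd (sub_eq_zero.mp h) ha
      · exact sub_eq_zero.mp h
    have hy : y = y' := by linear_combination h11 - h12 + a1 * hx
    rw [hx, hy]

end Base


section Host

variable (q s n : ℕ) [Fact q.Prime]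

lemma cardVb : Fintype.card (Vb q) = 2 * q ^ 2 := by
  haveI : NeZero q := ⟨(Fact.out : q.Prime).ne_zero⟩
  simp [Fintype.card_sum, Fintype.card_prod, ZMod.card]
  ring

noncomputable def eV : Vb q ≃ Fin (2 * q ^ 2) :=
  Fintype.equivFinOfCardEq (cardVb q)

noncomputable def blk : Fin n → Option (Vb q) := fun i =>
  if h : i.val < 2 * q ^ 2 * s then
    some ((eV q).symm ⟨i.val / s, by
      have hs : 0 < s := by
        rcases Nat.eq_zero_or_pos s with rfl | hs
        · simp at h
        · exact hs
      exact (Nat.div_lt_iff_lt_mul hs).mpr h⟩)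
  else none

noncomputable def enc (hsn : 2 * q ^ 2 * s ≤ n) : Vb q → Fin s → Fin n := fun v α =>
  ⟨((eV q) v).val * s + α.val, by
    have h1 : ((eV q) v).val < 2 * q ^ 2 := ((eV q) v).isLt
    have h2 : α.val < s := α.isLt
    calc ((eV q) v).val * s + α.val < (((eV q) v).val + 1) * s := by
          rw [Nat.add_mul, Nat.one_mul]; omega
    _ ≤ 2 * q ^ 2 * s := Nat.mul_le_mul_right s (by omega)
    _ ≤ n := hsn⟩

lemma blk_enc (hsn : 2 * q ^ 2 * s ≤ n) (v : Vb q) (α : Fin s) :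
    blk q s n (enc q s n hsn v α) = some v := by
  have hs : 0 < s := α.pos
  have hlt : (enc q s n hsn v α).val < 2 * q ^ 2 * s := by
    show ((eV q) v).val * s + α.val < 2 * q ^ 2 * s
    have h1 : ((eV q) v).val < 2 * q ^ 2 := ((eV q) v).isLt
    have h2 : α.val < s := α.isLt
    calc ((eV q) v).val * s + α.val < (((eV q) v).val + 1) * s := by
          rw [Nat.add_mul, Nat.one_mul]; omega
    _ ≤ 2 * q ^ 2 * s := Nat.mul_le_mul_right s (by omega)
  have hdiv : (enc q s n hsn v α).val / s = ((eV q) v).val := by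
    show (((eV q) v).val * s + α.val) / s = ((eV q) v).val
    rw [Nat.add_comm, Nat.add_mul_div_right _ _ hs, Nat.div_eq_of_lt α.isLt, Nat.zero_add]
  rw [blk, dif_pos hlt]
  congr 1
  rw [Equiv.symm_apply_eq]
  exact Fin.ext hdiv

lemma blk_fiber (b : Vb q) :
    ((univ : Finset (Fin n)).filter (fun i => blk q s n i = some b)).card ≤ s := by
  classical
  rcases Nat.eq_zero_or_pos s with rfl | hs
  · convert Nat.zero_le 0
    rw [Finset.card_eq_zero, Finset.filter_eq_empty_iff]
    intro i _
    rw [blk]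
    split
    · next h => simp at h
    · simp
  have hkey : ∀ i : Fin n, blk q s n i = some b →
      i.val < 2 * q ^ 2 * s ∧ i.val / s = ((eV q) b).val := by
    intro i hi
    rw [blk] at hi
    split at hi
    · next h =>
      refine ⟨h, ?_⟩
      have h1 := Option.some_injective _ hi
      rw [Equiv.symm_apply_eq] at h1
      exact congrArg Fin.val h1
    · simp at hi
  calc ((univ : Finset (Fin n)).filter (fun i => blk q s n i = some b)).card
      ≤ (univ : Finset (Fin s)).card := by
        apply Finset.card_le_card_of_injOn (fun i => ⟨i.val % s, Nat.mod_lt _ hs⟩)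
        · intro i _; exact Finset.mem_univ _
        · intro i hi i' hi' hii
          rw [Finset.mem_coe, Finset.mem_filter] at hi hi'
          have k1 := hkey i hi.2
          have k2 := hkey i' hi'.2
          have hmod : i.val % s = i'.val % s := by
            have := congrArg Fin.val hii
            simpa using this
          have hdd : i.val / s = i'.val / s := by rw [k1.2, k2.2]
          have d1 := Nat.div_add_mod i.val s
          have d2 := Nat.div_add_mod i'.val s
          rw [hdd, hmod] at d1
          apply Fin.ext
          omega
  _ = s := by simp

noncomputable def hostG : SimpleGraph (Fin n) where
  Adj i j := ∃ u v, blk q s n i = some u ∧ blk q s n j = some v ∧ (Bgraph q).Adj u v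
  symm := ⟨by
    rintro i j ⟨u, v, h1, h2, h3⟩
    exact ⟨v, u, h2, h1, h3.symm⟩⟩
  loopless := ⟨by
    rintro i ⟨u, v, h1, h2, h3⟩
    rw [h1] at h2
    have := Option.some_injective _ h2
    subst this
    exact (Bgraph q).loopless.irrefl u h3⟩

lemma host_edges (hsn : 2 * q ^ 2 * s ≤ n) :
    q ^ 3 * s ^ 2 ≤ (hostG q s n).edgeSet.ncard := by
  classical
  set F : (ZMod q × ZMod q) × ZMod q × Fin s × Fin s → Sym2 (Fin n) := fun z =>
    s(enc q s n hsn (Sum.inl (z.2.1, z.1.1 * z.2.1 + z.1.2)) z.2.2.1,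
      enc q s n hsn (Sum.inr z.1) z.2.2.2) with hF
  have hmem : ∀ z, F z ∈ (hostG q s n).edgeSet := by
    intro z
    rw [hF]
    show (hostG q s n).Adj _ _
    exact ⟨Sum.inl (z.2.1, z.1.1 * z.2.1 + z.1.2), Sum.inr z.1,
      blk_enc q s n hsn _ _, blk_enc q s n hsn _ _, rfl⟩
  set F' : (ZMod q × ZMod q) × ZMod q × Fin s × Fin s → (hostG q s n).edgeSet :=
    fun z => ⟨F z, hmem z⟩ with hF'
  have henc : ∀ (v v' : Vb q) (α α' : Fin s),
      enc q s n hsn v α = enc q s n hsn v' α' → v = v' ∧ α = α' := by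
    intro v v' α α' he
    have h1 := congrArg (blk q s n) he
    rw [blk_enc, blk_enc] at h1
    have hv : v = v' := Option.some_injective _ h1
    subst hv
    have h2 : ((eV q) v).val * s + α.val = ((eV q) v).val * s + α'.val :=
      congrArg Fin.val he
    exact ⟨rfl, Fin.ext (by omega)⟩
  have hinj : Function.Injective F' := by
    intro z z' h
    have hFz : F z = F z' := congrArg Subtype.val h
    rw [hF] at hFz
    rcases Sym2.eq_iff.mp hFz with ⟨h1, h2⟩ | ⟨h1, h2⟩
    · have e1 := henc _ _ _ _ h1
      have e2 := henc _ _ _ _ h2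
      obtain ⟨ha, hb⟩ := e1
      obtain ⟨hc, hd⟩ := e2
      have hl : z.1 = z'.1 := by
        have := Sum.inr.inj hc
        exact this
      have hx : z.2.1 = z'.2.1 := by
        have := Sum.inl.inj ha
        exact (Prod.ext_iff.mp this).1
      refine Prod.ext hl (Prod.ext hx (Prod.ext hb hd))
    · exfalso
      have h1' := congrArg (blk q s n) h1
      rw [blk_enc, blk_enc] at h1'
      simp at h1'
  have hcard : Nat.card ((ZMod q × ZMod q) × ZMod q × Fin s × Fin s) = q ^ 3 * s ^ 2 := by
    haveI : NeZero q := ⟨(Fact.out : q.Prime).ne_zero⟩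
    simp [Nat.card_eq_fintype_card, ZMod.card]
    ring
  have hle := Nat.card_le_card_of_injective F' hinj
  rw [hcard] at hle
  rwa [Nat.card_coe_set_eq] at hle

end Host



section NoGrid

lemma grid_neighbor {t : ℕ} (ht : 2 ≤ t) (v : Fin t × Fin t) :
    ∃ u, (gridGraph t).Adj v u := by
  obtain ⟨i, j⟩ := v
  by_cases h : j.val + 1 < t
  · exact ⟨(i, ⟨j.val + 1, h⟩), grid_adj_h rfl⟩
  · have h1 : 1 ≤ j.val := by have := j.isLt; omega
    refine ⟨(i, ⟨j.val - 1, by omega⟩), ?_⟩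
    refine (grid_adj_h ?_).symm
    show j.val - 1 + 1 = j.val
    omega

lemma host_no_grid {q s n t : ℕ} [Fact q.Prime] (ht : 2 ≤ t)
    (hcase : s = 1 ∨ 10 * s < t) :
    ¬ Contains (hostG q s n) (gridGraph t) := by
  classical
  rintro ⟨f, hinj⟩
  have ht0 : 0 < t := by omega
  set φ : Fin t × Fin t → Vb q :=
    fun v => ((blk q s n) (f v)).getD (Sum.inl (0, 0)) with hφ
  have hblk : ∀ v, blk q s n (f v) = some (φ v) := by
    intro v
    obtain ⟨u, hu⟩ := grid_neighbor ht v
    obtain ⟨a, b, h1, h2, h3⟩ := f.map_adj hu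
    rw [hφ]
    simp only [h1]
    rfl
  have hom : ∀ u v, (gridGraph t).Adj u v → (Bgraph q).Adj (φ u) (φ v) := by
    intro u v huv
    obtain ⟨a, b, h1, h2, h3⟩ := f.map_adj huv
    rw [hblk u] at h1
    rw [hblk v] at h2
    rw [Option.some_injective _ h1, Option.some_injective _ h2]
    exact h3
  have hfibφ : ∀ b, ((univ : Finset (Fin t × Fin t)).filter (fun v => φ v = b)).card ≤ s := by
    intro b
    calc ((univ : Finset (Fin t × Fin t)).filter (fun v => φ v = b)).card
        ≤ ((univ : Finset (Fin n)).filter (fun i => blk q s n i = some b)).card := by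
          apply Finset.card_le_card_of_injOn f
          · intro v hv
            rw [Finset.mem_coe, mem_filter] at hv
            rw [Finset.mem_coe, mem_filter]
            exact ⟨mem_univ _, by rw [hblk v, hv.2]⟩
          · intro a _ b _ hab
            exact hinj hab
    _ ≤ s := blk_fiber q s n b
  -- the ℕ-indexed version of φ
  set φ' : ℕ → ℕ → Vb q :=
    fun i j => φ (⟨i % t, Nat.mod_lt _ ht0⟩, ⟨j % t, Nat.mod_lt _ ht0⟩) with hφ'
  have hmkeq : ∀ v : Fin t × Fin t, φ' v.1.val v.2.val = φ v := by
    intro v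
    rw [hφ']
    simp only
    congr 1
    exact Prod.ext (Fin.ext (Nat.mod_eq_of_lt v.1.isLt)) (Fin.ext (Nat.mod_eq_of_lt v.2.isLt))
  have hH : ∀ i j, i < t → j + 1 < t → (Bgraph q).Adj (φ' i j) (φ' i (j+1)) := by
    intro i j hi hj
    apply hom
    apply grid_adj_h
    show j % t + 1 = (j+1) % t
    rw [Nat.mod_eq_of_lt (by omega), Nat.mod_eq_of_lt hj]
  have hV : ∀ i j, i + 1 < t → j < t → (Bgraph q).Adj (φ' i j) (φ' (i+1) j) := by
    intro i j hi hj
    apply hom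
    apply grid_adj_v
    show i % t + 1 = (i+1) % t
    rw [Nat.mod_eq_of_lt (by omega), Nat.mod_eq_of_lt hi]
  have hsq : ∀ i j, i + 1 < t → j + 1 < t →
      φ' i j = φ' (i+1) (j+1) ∨ φ' i (j+1) = φ' (i+1) j := by
    intro i j hi hj
    by_contra hcon
    push_neg at hcon
    obtain ⟨hne1, hne2⟩ := hcon
    apply hne2
    refine oneCommon_B q (φ' i j) (φ' (i+1) (j+1)) (φ' i (j+1)) (φ' (i+1) j) hne1
      (hH i j (by omega) hj) ((hV i (j+1) hi hj).symm)
      (hV i j hi (by omega)) ((hH (i+1) j hi hj).symm)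
  rcases hcase with hs1 | hts
  · -- s = 1 : φ is injective, contradiction with a single square
    subst hs1
    have hφinj : ∀ u v : Fin t × Fin t, φ u = φ v → u = v := by
      intro u v huv
      by_contra hne
      have hsub : ({u, v} : Finset (Fin t × Fin t)) ⊆
          (univ.filter (fun w => φ w = φ v)) := by
        intro w hw
        rw [Finset.mem_insert, Finset.mem_singleton] at hw
        rw [mem_filter]
        rcases hw with rfl | rfl
        · exact ⟨mem_univ _, huv⟩
        · exact ⟨mem_univ _, rfl⟩
      have h2 : ({u, v} : Finset (Fin t × Fin t)).card = 2 :=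
        Finset.card_pair hne
      have := Finset.card_le_card hsub
      have := hfibφ (φ v)
      omega
    have h01 : (0 : ℕ) % t = 0 := Nat.mod_eq_of_lt (by omega)
    have h11 : (1 : ℕ) % t = 1 := Nat.mod_eq_of_lt (by omega)
    rcases hsq 0 0 (by omega) (by omega) with h | h
    · have := hφinj _ _ h
      rw [Prod.ext_iff] at this
      have := congrArg Fin.val this.1
      simp [h01, h11] at this
    · have := hφinj _ _ h
      rw [Prod.ext_iff] at this
      have := congrArg Fin.val this.1
      simp [h01, h11] at this
  · -- the main case via the walk lift
    set Ψ : Fin t × Fin t → List (Vb q) := fun v => psiw φ' v.1.val v.2.val with hΨ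
    have hgood : ∀ v : Fin t × Fin t, GoodW (Bgraph q) (φ' 0 0) (Ψ v) :=
      fun v => psiw_good (Bgraph q) hH hV v.1.val v.2.val v.1.isLt v.2.isLt
    have hroot : ∀ v, [φ' 0 0] <:+ Ψ v := fun v => getLast?_suffix (hgood v).last
    have hhead : ∀ v : Fin t × Fin t, (Ψ v).head? = some (φ v) := by
      intro v
      rw [hΨ]
      simp only
      rw [psiw_head, hmkeq]
    have dich : ∀ (u v : Fin t × Fin t) (x : Vb q), Ψ v = step x (Ψ u) →
        (∃ y, Ψ v = y :: Ψ u) ∨ (∃ y, Ψ u = y :: Ψ v) := by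
      intro u v x hv
      rcases step_cases x (Ψ u) with hc | ⟨a, hp⟩
      · exact Or.inl ⟨x, by rw [hv, hc]⟩
      · rw [← hv] at hp
        exact Or.inr ⟨a, hp⟩
    have hstep : ∀ u v : Fin t × Fin t, (gridGraph t).Adj u v →
        (∃ x, Ψ v = x :: Ψ u) ∨ (∃ x, Ψ u = x :: Ψ v) := by
      intro u v huv
      obtain ⟨i1, j1⟩ := u
      obtain ⟨i2, j2⟩ := v
      rcases SimpleGraph.boxProd_adj.mp huv with ⟨hadj, heq⟩ | ⟨hadj, heq⟩
      · -- vertical : Adj i1 i2, j1 = j2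
        simp only at hadj heq
        rcases pathGraph_adj.mp hadj with hi | hi
        · refine dich _ _ (φ' (i1.val + 1) j1.val) ?_
          rw [hΨ]
          simp only
          rw [show (i2 : ℕ) = i1.val + 1 from hi.symm, show (j2 : ℕ) = j1.val from by rw [← heq]]
          exact psiw_vert (Bgraph q) hH hV hsq i1.val j1.val (hi ▸ i2.isLt) j1.isLt
        · refine (dich _ _ (φ' (i2.val + 1) j2.val) ?_).symm
          rw [hΨ]
          simp only
          rw [show (i1 : ℕ) = i2.val + 1 from hi.symm, show (j1 : ℕ) = j2.val from by rw [heq]]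
          exact psiw_vert (Bgraph q) hH hV hsq i2.val j2.val (hi ▸ i1.isLt) j2.isLt
      · -- horizontal : Adj j1 j2, i1 = i2
        simp only at hadj heq
        rcases pathGraph_adj.mp hadj with hj | hj
        · refine dich _ _ (φ' i1.val (j1.val + 1)) ?_
          rw [hΨ]
          simp only
          rw [show (i2 : ℕ) = i1.val from by rw [← heq], show (j2 : ℕ) = j1.val + 1 from hj.symm]
          rfl
        · refine (dich _ _ (φ' i2.val (j2.val + 1)) ?_).symm
          rw [hΨ]
          simp only
          rw [show (i1 : ℕ) = i2.val from by rw [heq], show (j1 : ℕ) = j2.val + 1 from hj.symm]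
          rfl
    have hfibΨ : ∀ L : List (Vb q),
        ((univ : Finset (Fin t × Fin t)).filter (fun v => Ψ v = L)).card ≤ s := by
      intro L
      rcases Finset.eq_empty_or_nonempty
        ((univ : Finset (Fin t × Fin t)).filter (fun v => Ψ v = L)) with he | ⟨v₁, hv₁⟩
      · rw [he]
        simp
      · have hsub : (univ.filter (fun v => Ψ v = L)) ⊆ (univ.filter (fun v => φ v = φ v₁)) := by
          intro v hv
          rw [mem_filter] at hv ⊢
          refine ⟨mem_univ _, ?_⟩
          have h1 := hhead v
          have h2 := hhead v₁
          rw [hv.2] at h1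
          rw [(mem_filter.mp hv₁).2] at h2
          rw [h1] at h2
          exact Option.some_injective _ h2
        exact le_trans (Finset.card_le_card hsub) (hfibφ _)
    exact no_small_fiber ht hts Ψ (φ' 0 0) hroot hstep hfibΨ

end NoGrid

end TuranGrid

open TuranGrid Finset in
/-- There is an absolute constant `c > 0` such that for every `t ≥ 2` and every
sufficiently large `n`, `ex(n, F_t) ≥ c · t^{1/2} · n^{3/2}`: there is an
`n`-vertex graph with at least `c · t^{1/2} · n^{3/2}` edges and no copy of
`F_t`. -/
theorem turan_grid_lower_sqrt_t :
    ∃ c : ℝ, 0 < c ∧ ∀ t : ℕ, 2 ≤ t → ∃ N : ℕ, ∀ n : ℕ, N ≤ n →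
      ∃ G : SimpleGraph (Fin n),
        c * (t : ℝ) ^ ((1 : ℝ) / 2) * (n : ℝ) ^ ((3 : ℝ) / 2) ≤ (G.edgeSet.ncard : ℝ) ∧
        ¬ Contains G (gridGraph t) := by
  classical
  refine ⟨1/150, by norm_num, ?_⟩
  intro t ht
  set s : ℕ := if t < 40 then 1 else t / 20 with hsdef
  have hdiv := Nat.div_add_mod t 20
  have hmod : t % 20 < 20 := Nat.mod_lt _ (by omega)
  have hs1 : 1 ≤ s := by
    rw [hsdef]
    split <;> omega
  have hcase : s = 1 ∨ 10 * s < t := by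
    rw [hsdef]
    split
    · exact Or.inl rfl
    · right; omega
  have hts40 : t ≤ 40 * s := by
    rw [hsdef]
    split <;> omega
  refine ⟨100 * s + 100, ?_⟩
  intro n hn
  set Q := (Finset.range (n+1)).filter (fun p => Nat.Prime p ∧ 2 * p ^ 2 * s ≤ n) with hQ
  have hQne : Q.Nonempty := by
    refine ⟨2, ?_⟩
    rw [hQ, mem_filter, Finset.mem_range]
    exact ⟨by omega, Nat.prime_two, by omega⟩
  obtain ⟨q, hqQ, hqmax⟩ := Q.exists_max_image (fun p => p) hQne
  rw [hQ, mem_filter, Finset.mem_range] at hqQ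
  obtain ⟨hqn1, hqP, hq2⟩ := hqQ
  haveI : Fact q.Prime := ⟨hqP⟩
  obtain ⟨p, hpP, hqp, hp2⟩ := Nat.exists_prime_lt_and_le_two_mul q hqP.ne_zero
  have hnp : n < 2 * p ^ 2 * s := by
    by_contra hle
    push_neg at hle
    have hpQ : p ∈ Q := by
      rw [hQ, mem_filter, Finset.mem_range]
      have hp1 : 1 ≤ p := hpP.one_lt.le.trans (le_refl _) |>.trans (le_refl _)
      have hps : p ≤ 2 * p ^ 2 * s := by nlinarith [hpP.two_le, hs1]
      exact ⟨by omega, hpP, hle⟩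
    have := hqmax p hpQ
    omega
  have hn8 : n < 8 * q ^ 2 * s := by
    have hp4 : p ^ 2 ≤ 4 * q ^ 2 := by nlinarith [hp2]
    calc n < 2 * p ^ 2 * s := hnp
    _ ≤ 2 * (4 * q ^ 2) * s := Nat.mul_le_mul_right s (Nat.mul_le_mul_left 2 hp4)
    _ = 8 * q ^ 2 * s := by ring
  refine ⟨hostG q s n, ?_, host_no_grid ht hcase⟩
  have hedges := host_edges q s n hq2
  have hcast : ((q ^ 3 * s ^ 2 : ℕ) : ℝ) ≤ ((hostG q s n).edgeSet.ncard : ℝ) := by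
    exact_mod_cast hedges
  refine le_trans ?_ hcast
  have hL0 : (0:ℝ) ≤ 1/150 * (t:ℝ) ^ ((1:ℝ)/2) * (n:ℝ) ^ ((3:ℝ)/2) := by positivity
  have hR0 : (0:ℝ) ≤ ((q ^ 3 * s ^ 2 : ℕ) : ℝ) := by positivity
  apply le_of_pow_le_pow_left₀ (n := 2) (by norm_num) hR0
  have h2t : ((t:ℝ) ^ ((1:ℝ)/2)) ^ (2:ℕ) = (t:ℝ) := by
    rw [← Real.rpow_natCast ((t:ℝ) ^ ((1:ℝ)/2)) 2, ← Real.rpow_mul (Nat.cast_nonneg t)]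
    norm_num
  have h2n : ((n:ℝ) ^ ((3:ℝ)/2)) ^ (2:ℕ) = ((n:ℝ)) ^ (3:ℕ) := by
    rw [← Real.rpow_natCast ((n:ℝ) ^ ((3:ℝ)/2)) 2, ← Real.rpow_mul (Nat.cast_nonneg n),
      ← Real.rpow_natCast (n:ℝ) 3]
    norm_num
  have hsq : (1/150 * (t:ℝ) ^ ((1:ℝ)/2) * (n:ℝ) ^ ((3:ℝ)/2)) ^ (2:ℕ)
      = (1/22500) * (t:ℝ) * (n:ℝ) ^ (3:ℕ) := by
    rw [mul_pow, mul_pow, h2t, h2n]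
    ring
  rw [hsq]
  have hNkey : t * n ^ 3 ≤ 22500 * (q ^ 3 * s ^ 2) ^ 2 := by
    calc t * n ^ 3 ≤ (40 * s) * (8 * q ^ 2 * s) ^ 3 :=
          Nat.mul_le_mul hts40 (Nat.pow_le_pow_left (le_of_lt hn8) 3)
    _ = 20480 * (q ^ 3 * s ^ 2) ^ 2 := by ring
    _ ≤ 22500 * (q ^ 3 * s ^ 2) ^ 2 := Nat.mul_le_mul_right _ (by norm_num)
  have hRkey : ((t : ℝ)) * (n:ℝ) ^ 3 ≤ 22500 * (((q ^ 3 * s ^ 2 : ℕ) : ℝ)) ^ 2 := by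
    exact_mod_cast hNkey
  linarith
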